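/- arXiv:1101.5959 — 2 statements merged into one kernel-verified Lean document; each statement's English description precedes it below -/
import Mathlib

section
/- Let X, Y be Banach spaces, F₁, F₂ : X ⇉ Y with ȳ ∈ F₁(x̄) ∩ F₂(x̄), graphs locally closed around (x̄,ȳ), F₁ metrically regular around (x̄,ȳ) with constant l > 0, F₂ Lipschitz-like around (x̄,ȳ) with constant m > 0, and lm < 1. Let S := {x ∈ X : F₁(x) ∩ F₂(x) ≠ ∅} = Fix(F₁⁻¹ ∘ F₂). Then there exist α, β > 0 such that for every x ∈ B(x̄,α), d(x, S) ≤ (l⁻¹ − m)⁻¹ · d(F₁(x) ∩ B(ȳ,β), F₂(x)). -/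
open Set Metric Pointwise
open Filter

private lemma exists_seq_df {σ : Type*} (Q : σ → Prop) (R : σ → σ → Prop)
    (s0 : σ) (h0 : Q s0) (h : ∀ s, Q s → ∃ t, Q t ∧ R s t) :
    ∃ f : ℕ → σ, f 0 = s0 ∧ (∀ n, Q (f n)) ∧ ∀ n, R (f n) (f (n + 1)) := by
  choose g hg1 hg2 using h
  let f : ℕ → {s // Q s} := fun n =>
    Nat.rec ⟨s0, h0⟩ (fun _ p => ⟨g p.1 p.2, hg1 p.1 p.2⟩) n
  exact ⟨fun n => (f n).1, rfl, fun n => (f n).2, fun n => hg2 (f n).1 (f n).2⟩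

set_option maxHeartbeats 1600000 in
/-- Dontchev–Frankowska fixed point estimate: the distance from `x` to the coincidence
set `S = {x : F₁(x) ∩ F₂(x) ≠ ∅}` is bounded by `(l⁻¹ − m)⁻¹ · d(F₁(x) ∩ B(y₀,β), F₂(x))`,
where `d(A,B) = d(0, A − B)` (with value `∞` if one of the sets is empty). -/
theorem dontchev_frankowska_fixed_point
    {X Y : Type*} [NormedAddCommGroup X] [NormedSpace ℝ X] [CompleteSpace X]
    [NormedAddCommGroup Y] [NormedSpace ℝ Y] [CompleteSpace Y]
    (F₁ F₂ : X → Set Y) (x₀ : X) (y₀ : Y)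
    (hy : y₀ ∈ F₁ x₀ ∩ F₂ x₀)
    (l m : ℝ) (hl : 0 < l) (hm : 0 < m) (hlm : l * m < 1)
    (hcl₁ : ∃ r > 0, IsClosed ({q : X × Y | q.2 ∈ F₁ q.1} ∩ Metric.closedBall (x₀, y₀) r))
    (hcl₂ : ∃ r > 0, IsClosed ({q : X × Y | q.2 ∈ F₂ q.1} ∩ Metric.closedBall (x₀, y₀) r))
    -- F₁ is l-metrically regular around (x₀, y₀)
    (hreg : ∃ U ∈ nhds x₀, ∃ V ∈ nhds y₀, ∀ x ∈ U, ∀ y ∈ V,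
      EMetric.infEdist x {x' | y ∈ F₁ x'} ≤ ENNReal.ofReal l * EMetric.infEdist y (F₁ x))
    -- F₂ is m-Lipschitz-like around (x₀, y₀)
    (hlip : ∃ U ∈ nhds x₀, ∃ V ∈ nhds y₀, ∀ x ∈ U, ∀ u ∈ U,
      F₂ x ∩ V ⊆ F₂ u + (m * ‖x - u‖) • Metric.closedBall (0:Y) 1) :
    ∃ α > 0, ∃ β > 0, ∀ x ∈ ball x₀ α,
      EMetric.infEdist x {x' | (F₁ x' ∩ F₂ x').Nonempty} ≤
        ENNReal.ofReal (l⁻¹ - m)⁻¹ *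
          EMetric.infEdist (0:Y) ((F₁ x ∩ ball y₀ β) - F₂ x) := by
  obtain ⟨hy1, hy2⟩ := hy
  obtain ⟨r₁, hr₁, hC₁⟩ := hcl₁
  obtain ⟨r₂, hr₂, hC₂⟩ := hcl₂
  obtain ⟨U₁, hU₁, V₁, hV₁, hreg⟩ := hreg
  obtain ⟨U₂, hU₂, V₂, hV₂, hlip⟩ := hlip
  obtain ⟨ρ₁, hρ₁pos, hρ₁⟩ := Metric.nhds_basis_closedBall.mem_iff.mp hU₁
  obtain ⟨ρ₂, hρ₂pos, hρ₂⟩ := Metric.nhds_basis_closedBall.mem_iff.mp hU₂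
  obtain ⟨ρ₃, hρ₃pos, hρ₃⟩ := Metric.nhds_basis_closedBall.mem_iff.mp hV₁
  obtain ⟨ρ₄, hρ₄pos, hρ₄⟩ := Metric.nhds_basis_closedBall.mem_iff.mp hV₂
  set ρ : ℝ := min (min (min ρ₁ ρ₂) (min ρ₃ ρ₄)) (min r₁ r₂) with hρdef
  have hρ : 0 < ρ := by positivity
  have hρle₁ : ρ ≤ ρ₁ := le_trans (min_le_left _ _) (le_trans (min_le_left _ _) (min_le_left _ _))
  have hρle₂ : ρ ≤ ρ₂ := le_trans (min_le_left _ _) (le_trans (min_le_left _ _) (min_le_right _ _))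
  have hρle₃ : ρ ≤ ρ₃ := le_trans (min_le_left _ _) (le_trans (min_le_right _ _) (min_le_left _ _))
  have hρle₄ : ρ ≤ ρ₄ := le_trans (min_le_left _ _) (le_trans (min_le_right _ _) (min_le_right _ _))
  have hρler₁ : ρ ≤ r₁ := le_trans (min_le_right _ _) (min_le_left _ _)
  have hρler₂ : ρ ≤ r₂ := le_trans (min_le_right _ _) (min_le_right _ _)
  have hXU₁ : ∀ p : X, dist p x₀ ≤ ρ → p ∈ U₁ := fun p hp =>
    hρ₁ (closedBall_subset_closedBall hρle₁ hp)
  have hXU₂ : ∀ p : X, dist p x₀ ≤ ρ → p ∈ U₂ := fun p hp =>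
    hρ₂ (closedBall_subset_closedBall hρle₂ hp)
  have hYV₁ : ∀ q : Y, dist q y₀ ≤ ρ → q ∈ V₁ := fun q hq =>
    hρ₃ (closedBall_subset_closedBall hρle₃ hq)
  have hYV₂ : ∀ q : Y, dist q y₀ ≤ ρ → q ∈ V₂ := fun q hq =>
    hρ₄ (closedBall_subset_closedBall hρle₄ hq)
  have h1lm : 0 < 1 - l * m := by linarith
  set c : ℝ := l / (1 - l * m) with hcdef
  have hc : 0 < c := by positivity
  have hcinv : (l⁻¹ - m)⁻¹ = c := by
    have h : l⁻¹ - m = (1 - l * m) / l := by field_simp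
    rw [h, inv_div, hcdef]
  set A : ℝ := (1 - l * m) / l with hAdef
  have hA0 : 0 < A := by positivity
  have hlA : l * A = 1 - l * m := by rw [hAdef]; field_simp
  clear_value A
  set K : ℝ := 2 * (l + 2) / (1 - l * m) with hKdef
  have hK : 0 < K := by positivity
  clear_value c K
  set β : ℝ := ρ / 2 with hβdef
  have hβpos : 0 < β := by positivity
  set α : ℝ := min 1 (min (ρ / (1 + K)) (ρ / (2 * (A + 1 + m * K)))) with hαdef
  have hden2 : 0 < A + 1 + m * K := by positivity
  have hα : 0 < α := by positivity
  have hα1 : α ≤ 1 := min_le_left _ _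
  have hαle1 : α ≤ ρ / (1 + K) := (min_le_right _ _).trans (min_le_left _ _)
  have hαle2 : α ≤ ρ / (2 * (A + 1 + m * K)) :=
    (min_le_right _ _).trans (min_le_right _ _)
  have hαK : α * (1 + K) ≤ ρ := by
    calc α * (1 + K) ≤ ρ / (1 + K) * (1 + K) :=
          mul_le_mul_of_nonneg_right hαle1 (by positivity)
      _ = ρ := by field_simp
  have hα2 : α * (A + 1 + m * K) ≤ ρ / 2 := by
    calc α * (A + 1 + m * K)
        ≤ ρ / (2 * (A + 1 + m * K)) * (A + 1 + m * K) :=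
          mul_le_mul_of_nonneg_right hαle2 hden2.le
      _ = ρ / 2 := by field_simp
  have hαlA : α * (l * A) = α * (1 - l * m) := by rw [hlA]
  have hαK' : α + α * K ≤ ρ := by nlinarith only [hαK]
  clear_value β α
  refine ⟨α, hα, β, hβpos, fun x hx => ?_⟩
  have hxd : dist x x₀ < α := mem_ball.mp hx
  set S : Set X := {x' | (F₁ x' ∩ F₂ x').Nonempty} with hSdef
  have hx₀S : x₀ ∈ S := ⟨y₀, hy1, hy2⟩
  set D : ENNReal := EMetric.infEdist (0:Y) ((F₁ x ∩ ball y₀ β) - F₂ x) with hDdef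
  by_cases hcase : ENNReal.ofReal α ≤ ENNReal.ofReal (l⁻¹ - m)⁻¹ * D
  · refine le_of_lt ?_
    calc EMetric.infEdist x S ≤ edist x x₀ := EMetric.infEdist_le_edist_of_mem hx₀S
      _ < ENNReal.ofReal α := by
          rw [edist_dist]; exact (ENNReal.ofReal_lt_ofReal_iff hα).mpr hxd
      _ ≤ _ := hcase
  · push_neg at hcase
    rw [hcinv] at hcase
    have hofc : (0:ENNReal) < ENNReal.ofReal c := ENNReal.ofReal_pos.mpr hc
    have hDtop : D ≠ ⊤ := by
      intro h
      rw [h, ENNReal.mul_top hofc.ne'] at hcase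
      exact (not_top_lt hcase).elim
    set Dr : ℝ := D.toReal with hDrdef
    have hDr0 : 0 ≤ Dr := ENNReal.toReal_nonneg
    have hDD : D = ENNReal.ofReal Dr := (ENNReal.ofReal_toReal hDtop).symm
    have hDrα : c * Dr < α := by
      rw [hDD, ← ENNReal.ofReal_mul hc.le] at hcase
      exact (ENNReal.ofReal_lt_ofReal_iff hα).mp hcase
    have hDrle : Dr ≤ α * A := by
      rw [hcdef, div_mul_eq_mul_div, div_lt_iff₀ h1lm] at hDrα
      have h5 : l * Dr ≤ l * (α * A) := by nlinarith only [hDrα, hαlA]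
      nlinarith only [h5, hl]
    clear_value Dr
    set ε₀ : ℝ := min α ((1 - l * m) / 2) with hε₀def
    have hε₀ : 0 < ε₀ := by positivity
    have hε₀α : ε₀ ≤ α := min_le_left _ _
    have hε₀lm : ε₀ ≤ (1 - l * m) / 2 := min_le_right _ _
    clear_value ε₀
    have key : ∀ ε : ℝ, ε ∈ Ioc (0:ℝ) ε₀ →
        EMetric.infEdist x S ≤
          ENNReal.ofReal ((l * (Dr + ε + m * ε) + ε ^ 2) / (1 - l * m - ε)) := by
      rintro ε ⟨hε, hεε₀⟩
      have hεα : ε ≤ α := hεε₀.trans hε₀α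
      have hεlm : ε ≤ (1 - l * m) / 2 := hεε₀.trans hε₀lm
      set θ : ℝ := l * m + ε with hθdef
      have hθ0 : 0 < θ := by positivity
      have hθ1 : θ < 1 := by simp only [hθdef]; linarith
      have h1θ : (1 - l * m) / 2 ≤ 1 - θ := by simp only [hθdef]; linarith
      have h1θ0 : 0 < 1 - θ := by linarith
      have hden : (1:ℝ) - θ = 1 - l * m - ε := by rw [hθdef]; ring
      clear_value θ
      have hDlt : D < ENNReal.ofReal (Dr + ε) := by
        rw [hDD]
        exact (ENNReal.ofReal_lt_ofReal_iff (by linarith only [hDr0, hε])).mpr (by linarith only [hε])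
      obtain ⟨q, hqmem, hqd⟩ := EMetric.infEdist_lt_iff.mp hDlt
      obtain ⟨y, hyA, z, hzB, rfl⟩ := Set.mem_sub.mp hqmem
      obtain ⟨hyF₁, hyball⟩ := hyA
      have hyy₀ : dist y y₀ < β := mem_ball.mp hyball
      have ht0 : dist y z ≤ Dr + ε := by
        have h := edist_lt_ofReal.mp hqd
        rw [dist_zero_left] at h
        rw [dist_eq_norm]
        exact h.le
      set t₀ : ℝ := dist y z with ht₀def
      have ht₀0 : 0 ≤ t₀ := dist_nonneg
      have hzy : dist z y = t₀ := dist_comm z y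
      clear_value t₀
      set C : ℝ := t₀ + m * ε with hCdef
      have hC0 : 0 ≤ C := by positivity
      clear_value C
      set E : ℝ := l * C + ε ^ 2 with hEdef
      have hE0 : 0 < E := by positivity
      clear_value E
      have ht₀le : t₀ ≤ α * A + α := by linarith only [ht0, hDrle, hεα]
      have hEle : E ≤ α * (l + 2) := by
        have hεsq : ε ^ 2 ≤ α := by
          have h := mul_le_mul hεα (hεα.trans hα1) hε.le hα.le
          calc ε ^ 2 = ε * ε := sq ε
            _ ≤ α * 1 := h
            _ = α := mul_one α
        have h3 : l * t₀ ≤ α * (1 - l * m) + l * α := by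
          nlinarith only [mul_le_mul_of_nonneg_left ht₀le hl.le, hαlA]
        have hlmε : l * m * ε ≤ l * m * α := mul_le_mul_of_nonneg_left hεα (mul_nonneg hl.le hm.le)
        simp only [hEdef, hCdef]
        nlinarith only [h3, hεsq, hlmε]
      have hEθ : E / (1 - θ) ≤ α * K := by
        have h1 : E / (1 - θ) ≤ (α * (l + 2)) / ((1 - l * m) / 2) :=
          div_le_div₀ (by positivity) hEle (by positivity) h1θ
        have h2 : (α * (l + 2)) / ((1 - l * m) / 2) = α * K := by
          rw [hKdef]; field_simp
        linarith only [h1, h2.le]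
      have hsumy : β + t₀ + m * (α * K) ≤ ρ := by
        simp only [hβdef]
        linarith only [hα2, ht₀le]
      have hfr : ∀ a : ℝ, 0 ≤ a → ∀ k : ℕ, a * (1 - θ ^ k) / (1 - θ) ≤ a / (1 - θ) := by
        intro a ha k
        apply (div_le_div_iff_of_pos_right h1θ0).mpr
        nlinarith only [mul_nonneg ha (pow_nonneg hθ0.le k)]
      have hgeom : ∀ (a : ℝ) (k : ℕ),
          a * θ ^ k + a * (1 - θ ^ k) / (1 - θ) = a * (1 - θ ^ (k + 1)) / (1 - θ) := by
        intro a k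
        field_simp [h1θ0.ne']
        ring
      set Q : ℕ × X × Y × Y → Prop := fun s =>
        s.2.2.1 ∈ F₁ s.2.1 ∧ s.2.2.2 ∈ F₂ s.2.1 ∧
        dist s.2.2.1 s.2.2.2 ≤ C * θ ^ s.1 ∧
        dist s.2.1 x ≤ E * (1 - θ ^ s.1) / (1 - θ) ∧
        dist s.2.2.2 z ≤ m * E * (1 - θ ^ s.1) / (1 - θ) ∧
        dist s.2.2.1 y₀ ≤ β + t₀ + m * E / (1 - θ) with hQdef
      set R : ℕ × X × Y × Y → ℕ × X × Y × Y → Prop := fun s t =>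
        t.1 = s.1 + 1 ∧ t.2.2.1 = s.2.2.2 ∧
        dist s.2.1 t.2.1 ≤ E * θ ^ s.1 ∧ dist s.2.2.2 t.2.2.2 ≤ m * E * θ ^ s.1 with hRdef
      have hmEfr : m * E / (1 - θ) ≤ m * (α * K) := by
        rw [mul_div_assoc]
        exact mul_le_mul_of_nonneg_left hEθ hm.le
      have hQ0 : Q (0, x, y, z) := by
        refine ⟨hyF₁, hzB, ?_, ?_, ?_, ?_⟩
        · have h : dist y z ≤ C := by
            rw [hCdef, ← ht₀def]
            nlinarith only [mul_nonneg hm.le hε.le]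
          simpa using h
        · simp
        · simp
        · have : 0 ≤ m * E / (1 - θ) := div_nonneg (mul_nonneg hm.le hE0.le) h1θ0.le
          simp only []
          linarith only [hyy₀.le, ht₀0, this]
      have hstep : ∀ s, Q s → ∃ t, Q t ∧ R s t := by
        rintro ⟨n, p, v, u⟩ ⟨hvF, huF, hvu, hpx, huz, hvy⟩
        simp only [] at hvF huF hvu hpx huz hvy
        have hθn0 : 0 < θ ^ n := pow_pos hθ0 n
        have hfrE := hfr E hE0.le n
        have hfrmE := hfr (m * E) (mul_nonneg hm.le hE0.le) n
        have hpρ : dist p x₀ ≤ ρ := by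
          have := dist_triangle p x x₀
          linarith only [this, hpx, hxd.le, hfrE, hEθ, hαK']
        have huρ : dist u y₀ ≤ ρ := by
          have h1 := dist_triangle u z y₀
          have h2 := dist_triangle z y y₀
          linarith only [h1, h2, hzy, huz, hfrmE, hmEfr, hsumy, hyy₀.le]
        have hregapp := hreg p (hXU₁ p hpρ) u (hYV₁ u huρ)
        have hinf1 : EMetric.infEdist u (F₁ p) ≤ ENNReal.ofReal (C * θ ^ n) := by
          refine le_trans (EMetric.infEdist_le_edist_of_mem hvF) ?_
          rw [edist_dist]
          exact ENNReal.ofReal_le_ofReal (by rw [dist_comm]; exact hvu)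
        have h2 : EMetric.infEdist p {x' | u ∈ F₁ x'} < ENNReal.ofReal (E * θ ^ n) := by
          have ha : EMetric.infEdist p {x' | u ∈ F₁ x'} ≤
              ENNReal.ofReal l * ENNReal.ofReal (C * θ ^ n) :=
            le_trans hregapp (mul_le_mul_right hinf1 _)
          refine lt_of_le_of_lt ha ?_
          rw [← ENNReal.ofReal_mul hl.le]
          apply (ENNReal.ofReal_lt_ofReal_iff (by positivity)).mpr
          have hpos : 0 < ε ^ 2 * θ ^ n := by positivity
          simp only [hEdef]
          nlinarith only [hpos]
        obtain ⟨p', hp'F, hp'd⟩ := EMetric.infEdist_lt_iff.mp h2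
        have hp'F : u ∈ F₁ p' := hp'F
        have hpp' : dist p p' ≤ E * θ ^ n := (edist_lt_ofReal.mp hp'd).le
        have hp'p : dist p' p ≤ E * θ ^ n := by rw [dist_comm]; exact hpp'
        have hgE := hgeom E n
        have hfrE1 := hfr E hE0.le (n + 1)
        have hp'ρ : dist p' x₀ ≤ ρ := by
          have h1 := dist_triangle p' p x₀
          have h2 := dist_triangle p x x₀
          linarith only [h1, h2, hp'p, hpx, hxd.le, hgE, hfrE1, hEθ, hαK']
        have hlipapp := hlip p (hXU₂ p hpρ) p' (hXU₂ p' hp'ρ)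
        have humem : u ∈ F₂ p' + (m * ‖p - p'‖) • closedBall (0:Y) 1 :=
          hlipapp ⟨huF, hYV₂ u huρ⟩
        obtain ⟨b, hbF, w, hw, hbw⟩ := Set.mem_add.mp humem
        obtain ⟨w', hw', hww⟩ := hw
        have hub : dist u b ≤ m * E * θ ^ n := by
          have huw : u - b = w := by rw [← hbw]; abel
          rw [dist_eq_norm, huw, ← hww, norm_smul]
          have hn1 : ‖w'‖ ≤ 1 := mem_closedBall_zero_iff.mp hw'
          calc ‖m * ‖p - p'‖‖ * ‖w'‖ ≤ (m * ‖p - p'‖) * 1 := by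
                rw [Real.norm_eq_abs, abs_of_nonneg (by positivity)]
                exact mul_le_mul_of_nonneg_left hn1 (by positivity)
            _ = m * dist p p' := by rw [mul_one, dist_eq_norm]
            _ ≤ m * (E * θ ^ n) := mul_le_mul_of_nonneg_left hpp' hm.le
            _ = m * E * θ ^ n := by ring
        have hmE : m * E ≤ C * θ := by
          simp only [hEdef, hCdef, hθdef]
          nlinarith only [mul_nonneg hε.le ht₀0]
        refine ⟨(n + 1, p', u, b), ⟨hp'F, hbF, ?_, ?_, ?_, ?_⟩, rfl, rfl, hpp', hub⟩
        · calc dist u b ≤ m * E * θ ^ n := hub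
            _ ≤ C * θ * θ ^ n := mul_le_mul_of_nonneg_right hmE hθn0.le
            _ = C * θ ^ (n + 1) := by ring
        · have h1 := dist_triangle p' p x
          simp only []
          linarith only [h1, hp'p, hpx, hgE]
        · have h1 := dist_triangle b u z
          have h2 : dist b u = dist u b := dist_comm b u
          have hgmE := hgeom (m * E) n
          simp only []
          linarith only [h1, h2, hub, huz, hgmE]
        · have h1 := dist_triangle u z y₀
          have h2 := dist_triangle z y y₀
          simp only []
          linarith only [h1, h2, hzy, huz, hfrmE, hyy₀.le]
      obtain ⟨f, hf0, hfQ, hfR⟩ := exists_seq_df Q R (0, x, y, z) hQ0 hstep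
      set pp : ℕ → X := fun n => (f n).2.1 with hppdef
      set uu : ℕ → Y := fun n => (f n).2.2.2 with huudef
      have hidx : ∀ n, (f n).1 = n := by
        intro n
        induction n with
        | zero => rw [hf0]
        | succ n ih => rw [(hfR n).1, ih]
      have hpd : ∀ n, dist (pp n) (pp (n + 1)) ≤ E * θ ^ n := fun n => by
        have h := (hfR n).2.2.1
        rwa [hidx n] at h
      have hud : ∀ n, dist (uu n) (uu (n + 1)) ≤ m * E * θ ^ n := fun n => by
        have h := (hfR n).2.2.2
        rwa [hidx n] at h
      have hppx : ∀ n, dist (pp n) x ≤ E / (1 - θ) := fun n => by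
        have h := (hfQ n).2.2.2.1
        rw [hidx n] at h
        exact le_trans h (hfr E hE0.le n)
      have huuz : ∀ n, dist (uu n) z ≤ m * E / (1 - θ) := fun n => by
        have h := (hfQ n).2.2.2.2.1
        rw [hidx n] at h
        exact le_trans h (hfr (m * E) (mul_nonneg hm.le hE0.le) n)
      have hmEfr : m * E / (1 - θ) ≤ m * (α * K) := by
        rw [mul_div_assoc]
        exact mul_le_mul_of_nonneg_left hEθ hm.le
      have hppρ : ∀ n, dist (pp n) x₀ ≤ ρ := fun n => by
        have h1 := dist_triangle (pp n) x x₀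
        linarith only [h1, hppx n, hxd.le, hEθ, hαK', hfr E hE0.le n]
      have huuρ : ∀ n, dist (uu n) y₀ ≤ ρ := fun n => by
        have h1 := dist_triangle (uu n) z y₀
        have h2 := dist_triangle z y y₀
        linarith only [h1, h2, hzy, huuz n, hmEfr, hsumy, hyy₀.le]
      have hcp : CauchySeq pp := cauchySeq_of_le_geometric θ E hθ1 hpd
      obtain ⟨x', hx'⟩ := cauchySeq_tendsto_of_complete hcp
      have hcu : CauchySeq uu := cauchySeq_of_le_geometric θ (m * E) hθ1 hud
      obtain ⟨u', hu'⟩ := cauchySeq_tendsto_of_complete hcu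
      have hvv : ∀ n, uu n ∈ F₁ (pp (n + 1)) := fun n => by
        have h := (hfQ (n + 1)).1
        have h2 := (hfR n).2.1
        rw [h2] at h
        exact h
      have hmem₁ : ∀ n, (pp (n + 1), uu n) ∈
          ({q : X × Y | q.2 ∈ F₁ q.1} ∩ closedBall (x₀, y₀) r₁) := fun n => by
        refine ⟨hvv n, ?_⟩
        rw [mem_closedBall, Prod.dist_eq]
        exact sup_le (le_trans (hppρ (n + 1)) hρler₁) (le_trans (huuρ n) hρler₁)
      have hmem₂ : ∀ n, (pp n, uu n) ∈
          ({q : X × Y | q.2 ∈ F₂ q.1} ∩ closedBall (x₀, y₀) r₂) := fun n => by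
        refine ⟨(hfQ n).2.1, ?_⟩
        rw [mem_closedBall, Prod.dist_eq]
        exact sup_le (le_trans (hppρ n) hρler₂) (le_trans (huuρ n) hρler₂)
      have hlim₁ : Tendsto (fun n => (pp (n + 1), uu n)) atTop (nhds (x', u')) :=
        Tendsto.prodMk_nhds (hx'.comp (tendsto_add_atTop_nat 1)) hu'
      have hlim₂ : Tendsto (fun n => (pp n, uu n)) atTop (nhds (x', u')) :=
        Tendsto.prodMk_nhds hx' hu'
      have h₁ := hC₁.mem_of_tendsto hlim₁ (Filter.Eventually.of_forall hmem₁)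
      have h₂ := hC₂.mem_of_tendsto hlim₂ (Filter.Eventually.of_forall hmem₂)
      have hx'S : x' ∈ S := ⟨u', h₁.1, h₂.1⟩
      have hpp0 : pp 0 = x := by
        show (f 0).2.1 = x
        rw [hf0]
      have hdxx' : dist x x' ≤ E / (1 - θ) := by
        have h := dist_le_of_le_geometric_of_tendsto₀ θ E hθ1 hpd hx'
        rwa [hpp0] at h
      have hEbound : E / (1 - θ) ≤ (l * (Dr + ε + m * ε) + ε ^ 2) / (1 - l * m - ε) := by
        rw [hden]
        apply (div_le_div_iff_of_pos_right (by linarith : (0:ℝ) < 1 - l * m - ε)).mpr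
        simp only [hEdef, hCdef]
        nlinarith only [mul_le_mul_of_nonneg_left ht0 hl.le]
      calc EMetric.infEdist x S ≤ edist x x' := EMetric.infEdist_le_edist_of_mem hx'S
        _ = ENNReal.ofReal (dist x x') := edist_dist x x'
        _ ≤ ENNReal.ofReal ((l * (Dr + ε + m * ε) + ε ^ 2) / (1 - l * m - ε)) :=
            ENNReal.ofReal_le_ofReal (le_trans hdxx' hEbound)
    have hc0 : ContinuousAt (fun ε : ℝ => (l * (Dr + ε + m * ε) + ε ^ 2) / (1 - l * m - ε)) 0 := by
      apply ContinuousAt.div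
      · fun_prop
      · fun_prop
      · simpa using h1lm.ne'
    have hlim : Tendsto (fun ε : ℝ => (l * (Dr + ε + m * ε) + ε ^ 2) / (1 - l * m - ε))
        (nhdsWithin 0 (Ioi 0)) (nhds (l * Dr / (1 - l * m))) := by
      have h0 : (l * (Dr + 0 + m * 0) + 0 ^ 2) / (1 - l * m - 0) = l * Dr / (1 - l * m) := by
        norm_num
      rw [← h0]
      exact hc0.tendsto.mono_left nhdsWithin_le_nhds
    have hfinal : EMetric.infEdist x S ≤ ENNReal.ofReal (l * Dr / (1 - l * m)) := by
      have hten : Tendsto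
          (fun ε : ℝ => ENNReal.ofReal ((l * (Dr + ε + m * ε) + ε ^ 2) / (1 - l * m - ε)))
          (nhdsWithin 0 (Ioi 0)) (nhds (ENNReal.ofReal (l * Dr / (1 - l * m)))) :=
        (ENNReal.continuous_ofReal.tendsto _).comp hlim
      refine ge_of_tendsto hten ?_
      filter_upwards [Ioc_mem_nhdsGT hε₀] with ε hε
      exact key ε hε
    rw [hcinv, hDD, ← ENNReal.ofReal_mul hc.le]
    refine le_trans hfinal (ENNReal.ofReal_le_ofReal (le_of_eq ?_))
    rw [hcdef]
    ring
end

section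
/- Let X, Y be Banach spaces and F : X ⇉ Y, G : Y ⇉ X set-valued maps with locally closed graphs, and let L, M > 0 with LM > 1. If F is L-open at every point of its graph and G is M-open at every point of its graph, then F − G⁻¹ is (L − M⁻¹)-open at every point of its graph. -/
open Set Metric Pointwise

open Filter

set_option maxHeartbeats 1000000
/-- Ekeland-type lemma: pointwise `L`-openness at every point of the graph plus a
closed piece of graph gives quantitative openness at rate `κ·L`. -/
lemma lemA {X Y : Type*} [NormedAddCommGroup X] [NormedSpace ℝ X] [CompleteSpace X]
    [NormedAddCommGroup Y] [NormedSpace ℝ Y] [CompleteSpace Y]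
    (F : X → Set Y) (L : ℝ) (hL : 0 < L)
    (hF : ∀ x : X, ∀ y ∈ F x, ∃ ε > 0, ∀ ρ ∈ Ioo (0:ℝ) ε,
      ball y (ρ * L) ⊆ ⋃ x' ∈ ball x ρ, F x')
    (xh : X) (yh : Y) (r : ℝ)
    (hS : IsClosed ({q : X × Y | q.2 ∈ F q.1} ∩ closedBall (xh, yh) r))
    (κ : ℝ) (hk0 : 0 < κ) (hk1 : κ < 1)
    (x₀ : X) (y₀ : Y) (v : Y) (h₀ : y₀ ∈ F x₀)
    (hbx : ‖x₀ - xh‖ + ‖v - y₀‖ / (κ * L) < r)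
    (hby : ‖y₀ - yh‖ + ‖v - y₀‖ / κ < r) :
    ∃ x₁ : X, v ∈ F x₁ ∧ ‖x₁ - x₀‖ ≤ ‖v - y₀‖ / (κ * L) := by
  classical
  have hkL : 0 < κ * L := mul_pos hk0 hL
  set S : Set (X × Y) := {q : X × Y | q.2 ∈ F q.1} ∩ closedBall (xh, yh) r with hSdef
  set φ : X × Y → ℝ := fun u => ‖v - u.2‖ with hφ
  set dd : X × Y → X × Y → ℝ := fun a b => max (L * ‖a.1 - b.1‖) ‖a.2 - b.2‖ with hdd
  have hφ0 : ∀ u, 0 ≤ φ u := fun u => norm_nonneg _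
  have hdd0 : ∀ a b, 0 ≤ dd a b := fun a b => le_max_of_le_right (norm_nonneg _)
  have hddself : ∀ a, dd a a = 0 := by
    intro a; simp [hdd]
  have hddtri : ∀ a b c, dd a c ≤ dd a b + dd b c := by
    intro a b c
    have h1 : L * ‖a.1 - c.1‖ ≤ dd a b + dd b c := by
      calc L * ‖a.1 - c.1‖ ≤ L * (‖a.1 - b.1‖ + ‖b.1 - c.1‖) := by
            apply mul_le_mul_of_nonneg_left _ hL.le
            exact (norm_sub_le_norm_sub_add_norm_sub _ _ _)
        _ = L * ‖a.1 - b.1‖ + L * ‖b.1 - c.1‖ := by ring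
        _ ≤ dd a b + dd b c := add_le_add (le_max_left _ _) (le_max_left _ _)
    have h2 : ‖a.2 - c.2‖ ≤ dd a b + dd b c := by
      calc ‖a.2 - c.2‖ ≤ ‖a.2 - b.2‖ + ‖b.2 - c.2‖ := norm_sub_le_norm_sub_add_norm_sub _ _ _
        _ ≤ dd a b + dd b c := add_le_add (le_max_right _ _) (le_max_right _ _)
    exact max_le h1 h2
  have hc : 0 < min L 1 := lt_min hL one_pos
  have hdist : ∀ a b : X × Y, min L 1 * dist a b ≤ dd a b := by
    intro a b
    rw [Prod.dist_eq]
    rw [mul_max_of_nonneg _ _ hc.le]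
    apply max_le_max
    · rw [dist_eq_norm]
      exact mul_le_mul_of_nonneg_right (min_le_left _ _) (norm_nonneg _)
    · rw [dist_eq_norm]
      calc min L 1 * ‖a.2 - b.2‖ ≤ 1 * ‖a.2 - b.2‖ :=
            mul_le_mul_of_nonneg_right (min_le_right _ _) (norm_nonneg _)
        _ = ‖a.2 - b.2‖ := one_mul _
  set T : X × Y → Set (X × Y) := fun a => {b | b ∈ S ∧ φ b + κ * dd b a ≤ φ a} with hT
  have hTself : ∀ a, a ∈ S → a ∈ T a := by
    intro a ha
    refine ⟨ha, ?_⟩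
    rw [hddself]; simp
  have hu₀S : (x₀, y₀) ∈ S := by
    constructor
    · exact h₀
    · rw [mem_closedBall, Prod.dist_eq]
      have d1 : ‖v - y₀‖ / (κ * L) ≥ 0 := div_nonneg (norm_nonneg _) hkL.le
      have d2 : ‖v - y₀‖ / κ ≥ 0 := div_nonneg (norm_nonneg _) hk0.le
      apply max_le
      · rw [dist_eq_norm]; linarith
      · rw [dist_eq_norm]; linarith
  have hchoice : ∀ (n : ℕ) (a : X × Y), a ∈ S →
      ∃ b, b ∈ T a ∧ ∀ c ∈ T a, φ b ≤ φ c + (1/2 : ℝ)^n := by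
    intro n a ha
    have hne : (φ '' T a).Nonempty := ⟨φ a, a, hTself a ha, rfl⟩
    have hbdd : BddBelow (φ '' T a) := ⟨0, by rintro _ ⟨b, -, rfl⟩; exact hφ0 b⟩
    have hlt : sInf (φ '' T a) < sInf (φ '' T a) + (1/2 : ℝ)^n := by
      have : (0:ℝ) < (1/2 : ℝ)^n := by positivity
      linarith
    obtain ⟨w, ⟨b, hb, rfl⟩, hwlt⟩ := exists_lt_of_csInf_lt hne hlt
    refine ⟨b, hb, fun c hc => ?_⟩
    have : sInf (φ '' T a) ≤ φ c := csInf_le hbdd ⟨c, hc, rfl⟩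
    linarith
  choose! f hf1 hf2 using hchoice
  let u : ℕ → X × Y := fun n => Nat.rec (x₀, y₀) (fun k p => f k p) n
  have hu0 : u 0 = (x₀, y₀) := rfl
  have husucc : ∀ n, u (n+1) = f n (u n) := fun _ => rfl
  have huS : ∀ n, u n ∈ S := by
    intro n
    induction n with
    | zero => exact hu₀S
    | succ k ih =>
      rw [husucc k]
      exact (hf1 k (u k) ih).1
  have hTmem : ∀ n, u (n+1) ∈ T (u n) := by
    intro n; rw [husucc n]; exact hf1 n (u n) (huS n)
  have hnear : ∀ n, ∀ c ∈ T (u n), φ (u (n+1)) ≤ φ c + (1/2:ℝ)^n := by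
    intro n; rw [husucc n]; exact hf2 n (u n) (huS n)
  have hTstep : ∀ n, T (u (n+1)) ⊆ T (u n) := by
    intro n b hb
    obtain ⟨hbS, hbφ⟩ := hb
    refine ⟨hbS, ?_⟩
    have h1 := (hTmem n).2
    have h2 := hddtri b (u (n+1)) (u n)
    nlinarith [hdd0 b (u (n+1)), hdd0 (u (n+1)) (u n)]
  have hTmono : ∀ n m, n ≤ m → T (u m) ⊆ T (u n) := by
    intro n m hnm
    induction hnm with
    | refl => exact fun b hb => hb
    | step h ih => exact fun b hb => ih (hTstep _ hb)
  have huT : ∀ n m, n ≤ m → u m ∈ T (u n) :=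
    fun n m hnm => hTmono n m hnm (hTself (u m) (huS m))
  -- Cauchy
  have hcas : ∀ n, dist (u n) (u (n+1)) ≤ (φ (u n) - φ (u (n+1))) / (κ * min L 1) := by
    intro n
    have h1 := (hTmem n).2
    have h2 := hdist (u (n+1)) (u n)
    rw [dist_comm, le_div_iff₀ (by positivity)]
    nlinarith [mul_le_mul_of_nonneg_left h2 hk0.le]
  have hsummable : Summable (fun n => dist (u n) (u (n+1))) := by
    apply summable_of_sum_range_le (c := φ (u 0) / (κ * min L 1)) (fun n => dist_nonneg)
    intro n
    calc ∑ i ∈ Finset.range n, dist (u i) (u (i+1))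
        ≤ ∑ i ∈ Finset.range n, (φ (u i) - φ (u (i+1))) / (κ * min L 1) :=
          Finset.sum_le_sum (fun i _ => hcas i)
      _ = (∑ i ∈ Finset.range n, (φ (u i) - φ (u (i+1)))) / (κ * min L 1) := by
          rw [Finset.sum_div]
      _ = (φ (u 0) - φ (u n)) / (κ * min L 1) := by
          rw [Finset.sum_range_sub' (fun i => φ (u i))]
      _ ≤ φ (u 0) / (κ * min L 1) := by
          have h0 : φ (u 0) - φ (u n) ≤ φ (u 0) := by linarith [hφ0 (u n)]
          exact (div_le_div_iff_of_pos_right (by positivity)).mpr h0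
  obtain ⟨ub, hub⟩ := cauchySeq_tendsto_of_complete (cauchySeq_of_summable_dist hsummable)
  have hubS : ub ∈ S := hS.mem_of_tendsto hub (Filter.Eventually.of_forall huS)
  have ht2 : Tendsto (fun n => (u n).2) atTop (nhds ub.2) := (continuous_snd.tendsto ub).comp hub
  have ht1 : Tendsto (fun n => (u n).1) atTop (nhds ub.1) := (continuous_fst.tendsto ub).comp hub
  have hφt : Tendsto (fun n => φ (u n)) atTop (nhds (φ ub)) := by
    exact (tendsto_const_nhds.sub ht2).norm
  have hddt : ∀ a : X × Y, Tendsto (fun n => dd (u n) a) atTop (nhds (dd ub a)) := by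
    intro a
    exact Tendsto.max (((ht1.sub tendsto_const_nhds).norm).const_mul L)
      ((ht2.sub tendsto_const_nhds).norm)
  have hubT : ∀ n, φ ub + κ * dd ub (u n) ≤ φ (u n) := by
    intro n
    apply le_of_tendsto (hφt.add ((hddt (u n)).const_mul κ))
    filter_upwards [Filter.eventually_ge_atTop n] with m hm
    exact (huT n m hm).2
  -- key Ekeland property
  have hK : ∀ b ∈ S, φ ub ≤ φ b + κ * dd b ub := by
    intro b hbS
    by_contra hcon
    push_neg at hcon
    have hbT : ∀ n, b ∈ T (u n) := by
      intro n
      refine ⟨hbS, ?_⟩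
      have h2 := hddtri b ub (u n)
      have h3 := hubT n
      nlinarith [hdd0 b ub, hdd0 ub (u n)]
    have hdd2 : ∀ n, κ * dd b (u (n+1)) ≤ (1/2:ℝ)^n := by
      intro n
      have h1 := (hbT (n+1)).2
      have h2 := hnear n b (hbT n)
      linarith
    have hdb : Tendsto (fun n => dist (u (n+1)) b) atTop (nhds 0) := by
      apply squeeze_zero (fun n => dist_nonneg)
        (g := fun n => (1/2:ℝ)^n / (κ * min L 1))
      · intro n
        have h1 := hdist (u (n+1)) b
        have h2 := hdd2 n
        rw [le_div_iff₀ (by positivity)]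
        have hsym : dd b (u (n+1)) = dd (u (n+1)) b := by
          simp [hdd, norm_sub_rev]
        nlinarith [mul_le_mul_of_nonneg_left h1 hk0.le, dist_nonneg (x := u (n+1)) (y := b)]
      · rw [show (0:ℝ) = 0 / (κ * min L 1) by simp]
        exact (tendsto_pow_atTop_nhds_zero_of_lt_one (by norm_num) (by norm_num)).div_const _
    have hub2 : Tendsto (fun n => u (n+1)) atTop (nhds b) := by
      rw [tendsto_iff_dist_tendsto_zero]
      exact hdb
    have hub3 : Tendsto (fun n => u (n+1)) atTop (nhds ub) :=
      hub.comp (tendsto_add_atTop_nat 1)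
    have hbub : b = ub := tendsto_nhds_unique hub2 hub3
    rw [hbub, hddself, mul_zero, add_zero] at hcon
    exact absurd hcon (lt_irrefl _)
  have hu0T := hubT 0
  rw [hu0] at hu0T
  have hφu0 : φ (x₀, y₀) = ‖v - y₀‖ := rfl
  have hddub0 : dd ub (x₀, y₀) ≤ ‖v - y₀‖ / κ := by
    rw [le_div_iff₀ hk0]
    have h := hu0T
    rw [hφu0] at h
    nlinarith [hφ0 ub]
  have hxb : ‖ub.1 - x₀‖ ≤ ‖v - y₀‖ / (κ * L) := by
    have h1 : L * ‖ub.1 - x₀‖ ≤ dd ub (x₀, y₀) := le_max_left _ _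
    have := h1.trans hddub0
    rw [le_div_iff₀ hkL]
    calc ‖ub.1 - x₀‖ * (κ * L) = κ * (L * ‖ub.1 - x₀‖) := by ring
      _ ≤ κ * (‖v - y₀‖ / κ) := mul_le_mul_of_nonneg_left this hk0.le
      _ = ‖v - y₀‖ := by field_simp
  have hyb : ‖ub.2 - y₀‖ ≤ ‖v - y₀‖ / κ := le_trans (le_max_right _ _) hddub0
  -- show φ ub = 0
  have hφub : φ ub = 0 := by
    by_contra hne
    have hdpos : 0 < φ ub := lt_of_le_of_ne (hφ0 ub) (Ne.symm hne)
    set d : ℝ := φ ub with hd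
    obtain ⟨εb, hεb, hεb2⟩ := hF ub.1 ub.2 hubS.1
    set mx : ℝ := r - (‖x₀ - xh‖ + ‖v - y₀‖ / (κ * L)) with hmx
    set my : ℝ := r - (‖y₀ - yh‖ + ‖v - y₀‖ / κ) with hmy
    have hmxpos : 0 < mx := by simp [hmx]; linarith
    have hmypos : 0 < my := by simp [hmy]; linarith
    set k2 : ℝ := (1 + κ)/2 with hk2
    have hk2a : κ < k2 := by simp [hk2]; linarith
    have hk2b : k2 < 1 := by simp [hk2]; linarith
    have hk2c : 0 < k2 := by simp [hk2]; linarith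
    set t : ℝ := min (min (1/2) (εb * k2 * L / (2 * d))) (min (mx * k2 * L / d) (my / d)) with hts
    have htpos : 0 < t := by
      apply lt_min (lt_min (by norm_num) (by positivity)) (lt_min (by positivity) (by positivity))
    have ht12 : t ≤ 1/2 := le_trans (min_le_left _ _) (min_le_left _ _)
    set ρ : ℝ := t * d / (k2 * L) with hρs
    have hρpos : 0 < ρ := by positivity
    have hρε : ρ < εb := by
      have h1 : t ≤ εb * k2 * L / (2 * d) := le_trans (min_le_left _ _) (min_le_right _ _)
      rw [hρs, div_lt_iff₀ (by positivity)]
      rw [le_div_iff₀ (by positivity)] at h1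
      nlinarith [mul_pos htpos hdpos]
    have hρmx : ρ ≤ mx := by
      have h1 : t ≤ mx * k2 * L / d := le_trans (min_le_right _ _) (min_le_left _ _)
      rw [hρs, div_le_iff₀ (by positivity)]
      rw [le_div_iff₀ hdpos] at h1
      nlinarith
    have htdmy : t * d ≤ my := by
      have h1 : t ≤ my / d := le_trans (min_le_right _ _) (min_le_right _ _)
      rw [le_div_iff₀ hdpos] at h1
      exact h1
    set p : Y := ub.2 + t • (v - ub.2) with hp
    have hpnorm : ‖p - ub.2‖ = t * d := by
      rw [hp]
      simp only [add_sub_cancel_left, norm_smul, Real.norm_eq_abs, abs_of_pos htpos]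
      rfl
    have hpball : p ∈ ball ub.2 (ρ * L) := by
      rw [mem_ball, dist_eq_norm, hpnorm, hρs]
      rw [div_mul_eq_mul_div, lt_div_iff₀ (by positivity)]
      nlinarith [mul_pos (mul_pos htpos hdpos) hL]
    have := hεb2 ρ ⟨hρpos, hρε⟩ hpball
    simp only [mem_iUnion, exists_prop] at this
    obtain ⟨x', hx'ball, hpF⟩ := this
    have hx'n : ‖x' - ub.1‖ < ρ := by rwa [mem_ball, dist_eq_norm] at hx'ball
    have hbS2 : (x', p) ∈ S := by
      constructor
      · exact hpF
      · rw [mem_closedBall, Prod.dist_eq]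
        apply max_le
        · rw [dist_eq_norm]
          calc ‖x' - xh‖ ≤ ‖x' - ub.1‖ + ‖ub.1 - x₀‖ + ‖x₀ - xh‖ := by
                have := norm_sub_le_norm_sub_add_norm_sub x' x₀ xh
                have := norm_sub_le_norm_sub_add_norm_sub x' ub.1 x₀
                linarith
            _ ≤ r := by
                have : ‖x' - ub.1‖ < mx := lt_of_lt_of_le hx'n hρmx
                rw [hmx] at this
                linarith [hxb]
        · rw [dist_eq_norm]
          calc ‖p - yh‖ ≤ ‖p - ub.2‖ + ‖ub.2 - y₀‖ + ‖y₀ - yh‖ := by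
                have := norm_sub_le_norm_sub_add_norm_sub p y₀ yh
                have := norm_sub_le_norm_sub_add_norm_sub p ub.2 y₀
                linarith
            _ ≤ r := by
                rw [hpnorm]
                have : t * d ≤ my := htdmy
                rw [hmy] at this
                linarith [hyb]
    have hKb := hK (x', p) hbS2
    have hφb : φ (x', p) = (1 - t) * d := by
      show ‖v - p‖ = (1 - t) * d
      have hvp : v - p = (1 - t) • (v - ub.2) := by
        rw [hp, sub_smul, one_smul]
        abel
      rw [hvp, norm_smul, Real.norm_eq_abs, abs_of_pos (by linarith : (0:ℝ) < 1 - t)]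
    have hddb : dd (x', p) ub ≤ t * d / k2 := by
      apply max_le
      · calc L * ‖x' - ub.1‖ ≤ L * ρ := mul_le_mul_of_nonneg_left hx'n.le hL.le
          _ = t * d / k2 := by rw [hρs]; field_simp
      · show ‖p - ub.2‖ ≤ t * d / k2
        rw [hpnorm, le_div_iff₀ hk2c]
        nlinarith [mul_le_mul_of_nonneg_left hk2b.le (mul_pos htpos hdpos).le]
    rw [hφb] at hKb
    have : d ≤ (1 - t) * d + κ * (t * d / k2) := by
      calc d = φ ub := hd
        _ ≤ (1 - t) * d + κ * dd (x', p) ub := hKb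
        _ ≤ (1 - t) * d + κ * (t * d / k2) := by
            have := mul_le_mul_of_nonneg_left hddb hk0.le
            linarith
    have hkey : κ * (t * d / k2) < t * d := by
      rw [← mul_div_assoc, div_lt_iff₀ hk2c]
      nlinarith [mul_pos (sub_pos.mpr hk2a) (mul_pos htpos hdpos)]
    linarith
  have hveq : v = ub.2 := by
    have : ‖v - ub.2‖ = 0 := hφub
    rw [norm_eq_zero, sub_eq_zero] at this
    exact this
  refine ⟨ub.1, ?_, ?_⟩
  · rw [hveq]; exact hubS.1
  · have : ‖ub.1 - x₀‖ ≤ ‖v - y₀‖ / (κ * L) := hxb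
    exact this


open Set Metric Filter Pointwise

/-- Global fully set-valued Lyusternik–Graves theorem: if `F` is `L`-open at every
point of its graph and `G` is `M`-open at every point of its graph, with `L*M > 1` and
both graphs locally closed, then `F − G⁻¹` is `(L − M⁻¹)`-open at every point of its
graph. -/
theorem global_lyusternik_graves
    {X Y : Type*} [NormedAddCommGroup X] [NormedSpace ℝ X] [CompleteSpace X]
    [NormedAddCommGroup Y] [NormedSpace ℝ Y] [CompleteSpace Y]
    (F : X → Set Y) (G : Y → Set X)
    (L M : ℝ) (hL : 0 < L) (hM : 0 < M) (hLM : 1 < L * M)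
    (hclF : ∀ x : X, ∀ y ∈ F x, ∃ r > 0,
      IsClosed ({q : X × Y | q.2 ∈ F q.1} ∩ Metric.closedBall (x, y) r))
    (hclG : ∀ y : Y, ∀ x ∈ G y, ∃ r > 0,
      IsClosed ({q : Y × X | q.2 ∈ G q.1} ∩ Metric.closedBall (y, x) r))
    (hF : ∀ x : X, ∀ y ∈ F x, ∃ ε > 0, ∀ ρ ∈ Ioo (0:ℝ) ε,
      ball y (ρ * L) ⊆ ⋃ x' ∈ ball x ρ, F x')
    (hG : ∀ y : Y, ∀ x ∈ G y, ∃ ε > 0, ∀ ρ ∈ Ioo (0:ℝ) ε,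
      ball x (ρ * M) ⊆ ⋃ y' ∈ ball y ρ, G y') :
    ∀ x : X, ∀ w ∈ F x - {y | x ∈ G y}, ∃ ε > 0, ∀ ρ ∈ Ioo (0:ℝ) ε,
      ball w (ρ * (L - M⁻¹)) ⊆ ⋃ x' ∈ ball x ρ, (F x' - {y | x' ∈ G y}) := by
  intro x w hw
  obtain ⟨y, hy, z, hz, hyz⟩ := Set.mem_sub.mp hw
  obtain ⟨rF, hrF, hSF⟩ := hclF x y hy
  obtain ⟨rG, hrG, hSG⟩ := hclG z x hz
  have hP : 0 < L - M⁻¹ := by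
    have h1 : M⁻¹ < L := by
      rw [inv_lt_iff_one_lt_mul₀ hM]
      linarith [mul_comm L M]
    linarith
  -- constants
  set k₀ : ℝ := Real.sqrt ((1 + L*M)/(2*(L*M))) with hk₀def
  have hk₀sq : k₀^2 = (1 + L*M)/(2*(L*M)) := Real.sq_sqrt (by positivity)
  have hk₀pos : 0 < k₀ := Real.sqrt_pos.mpr (by positivity)
  have hk₀lt : k₀ < 1 := by
    have hsq : k₀^2 < 1 := by
      rw [hk₀sq, div_lt_one (by positivity)]
      linarith only [hLM]
    nlinarith only [hsq, hk₀pos]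
  have hk₀LM : 1 < k₀^2 * (L*M) := by
    rw [hk₀sq]
    rw [div_mul_eq_mul_div, lt_div_iff₀ (by positivity)]
    nlinarith only [hLM, mul_pos hL hM]
  set θ₀ : ℝ := 2/(1+L*M) with hθ₀def
  have hθ₀pos : 0 < θ₀ := by positivity
  have hθ₀lt : θ₀ < 1 := by
    rw [hθ₀def, div_lt_one (by positivity)]
    linarith only [hLM]
  set A : ℝ := 1/(1-θ₀) with hAdef
  have hApos : 0 < A := by
    rw [hAdef]
    exact div_pos one_pos (by linarith only [hθ₀lt])
  have hA1 : 1 ≤ A := by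
    rw [hAdef, le_div_iff₀ (by linarith only [hθ₀lt])]
    linarith only [hθ₀pos]
  set B : ℝ := A/(k₀*L) + A + 1/k₀ + 1/(k₀^2*(L*M)) + 1/(k₀^2*L) with hBdef
  have hB1 : 0 < A/(k₀*L) := by positivity
  have hB3 : 0 < 1/k₀ := by positivity
  have hB4 : 0 < 1/(k₀^2*(L*M)) := by positivity
  have hB5 : 0 < 1/(k₀^2*L) := by positivity
  have hBpos : 0 < B := by rw [hBdef]; positivity
  refine ⟨min rF rG / (L*B+1), by positivity, ?_⟩
  rintro ρ ⟨hρ0, hρε⟩ w' hw'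
  rw [mem_ball, dist_eq_norm] at hw'
  set δ : ℝ := ‖w' - w‖ with hδdef
  have hδnn : 0 ≤ δ := norm_nonneg _
  have hδρ : δ < ρ * (L - M⁻¹) := hw'
  -- choice of κ
  set σ : ℝ := δ/(ρ*(L-M⁻¹)) with hσdef
  have hσ0 : 0 ≤ σ := by positivity
  have hσ1 : σ < 1 := (div_lt_one (by positivity)).mpr hδρ
  have hδσ : δ = σ * (ρ*(L-M⁻¹)) := by
    rw [hσdef, div_mul_cancel₀ _ (by positivity : ρ*(L-M⁻¹) ≠ 0)]
  have hE : 0 < L + 2/M := by positivity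
  set η : ℝ := (1-σ)*(L-M⁻¹)/(2*(L+2/M)) with hηdef
  have hηpos : 0 < η := by
    rw [hηdef]
    exact div_pos (mul_pos (by linarith only [hσ1]) hP) (by positivity)
  set κ : ℝ := max (max k₀ (1/2)) (1-η) with hκdef
  have hκk₀ : k₀ ≤ κ := le_trans (le_max_left _ _) (le_max_left _ _)
  have hκhalf : 1/2 ≤ κ := le_trans (le_max_right _ _) (le_max_left _ _)
  have hκη : 1-η ≤ κ := le_max_right _ _
  have hκ1 : κ < 1 := by
    apply max_lt (max_lt hk₀lt (by norm_num))
    linarith only [hηpos]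
  have hκ0 : 0 < κ := lt_of_lt_of_le hk₀pos hκk₀
  have hκL : 0 < κ*L := by positivity
  have hκM : 0 < κ*M := by positivity
  have hκsq : k₀^2 ≤ κ^2 := pow_le_pow_left₀ hk₀pos.le hκk₀ 2
  have hκLM : 1 < κ^2*(L*M) :=
    lt_of_lt_of_le hk₀LM (mul_le_mul_of_nonneg_right hκsq (by positivity))
  set θ : ℝ := 1/(κ^2*(L*M)) with hθdef
  have hθpos : 0 < θ := by rw [hθdef]; positivity
  have hθ1 : θ < 1 := by
    rw [hθdef, div_lt_one (by positivity)]
    exact hκLM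
  have hθθ₀ : θ ≤ θ₀ := by
    have h1 : k₀^2*(L*M) = (1+L*M)/2 := by
      rw [hk₀sq]; field_simp
    have h2 : θ ≤ 1/(k₀^2*(L*M)) := by
      rw [hθdef]
      apply one_div_le_one_div_of_le (by positivity)
      exact mul_le_mul_of_nonneg_right hκsq (by positivity)
    rw [h1, one_div_div] at h2
    exact h2
  have hAθ : 1/(1-θ) ≤ A := by
    rw [hAdef]
    apply one_div_le_one_div_of_le (by linarith only [hθθ₀, hθ₀lt])
    linarith only [hθθ₀]
  -- the key rate inequality
  have hδκ : δ < ρ * (κ*L - 1/(κ*M)) := by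
    have ha : 1/(κ*M) ≤ (1 + 2*(1-κ))/M := by
      rw [div_le_div_iff₀ (by positivity) hM]
      nlinarith only [mul_nonneg (mul_nonneg (sub_nonneg.mpr hκ1.le)
        (by linarith only [hκhalf] : (0:ℝ) ≤ 2*κ - 1)) hM.le]
    have h2 : η * (L + 2/M) = (1-σ)*(L-M⁻¹)/2 := by
      rw [hηdef]; field_simp
    have h6 : (1-κ)*(L + 2/M) ≤ η*(L + 2/M) :=
      mul_le_mul_of_nonneg_right (by linarith) hE.le
    have hMinv : M⁻¹ = 1/M := (one_div M).symm
    have ha' : 1/(κ*M) ≤ 1/M + 2/M - 2*(κ/M) := by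
      have hdist : (1 + 2*(1-κ))/M = 1/M + 2/M - 2*(κ/M) := by ring
      linarith only [ha, hdist.le, hdist.ge]
    have h5 : (L - M⁻¹) - (1-κ)*(L + 2/M) ≤ κ*L - 1/(κ*M) := by
      rw [hMinv]
      have hexp : (1-κ)*(L + 2/M) = L - κ*L + 2/M - 2*(κ/M) := by ring
      linarith only [ha', hexp.le, hexp.ge]
    have h7 : (L-M⁻¹)*(1+σ)/2 ≤ κ*L - 1/(κ*M) := by
      have hid : (L - M⁻¹) - (1-σ)*(L-M⁻¹)/2 = (L-M⁻¹)*(1+σ)/2 := by ring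
      linarith only [h5, h6, h2, hid.le, hid.ge]
    calc δ = σ * (ρ*(L-M⁻¹)) := hδσ
      _ < ρ * ((L-M⁻¹)*(1+σ)/2) := by
          nlinarith only [mul_pos hρ0 hP, hσ0, hσ1]
      _ ≤ ρ * (κ*L - 1/(κ*M)) := by
          apply mul_le_mul_of_nonneg_left h7 hρ0.le
  -- geometric sums
  have hgeo' : ∀ n : ℕ, (∑ i ∈ Finset.range n, θ^i) ≤ 1/(1-θ) := by
    intro n
    have h1 := geom_sum_mul θ n
    rw [le_div_iff₀ (by linarith only [hθ1])]
    linarith only [h1, pow_nonneg hθpos.le n]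
  have hgeo : ∀ n : ℕ, (∑ i ∈ Finset.range n, θ^i) ≤ A := fun n => (hgeo' n).trans hAθ
  -- budget bound
  have hδB : δ * B < min rF rG := by
    have h1 : δ < ρ * L := by
      have h2 : ρ * (L - M⁻¹) ≤ ρ * L := by
        apply mul_le_mul_of_nonneg_left _ hρ0.le
        have h3 : (0:ℝ) ≤ M⁻¹ := by positivity
        linarith only [h3]
      linarith only [h2, hδρ]
    calc δ*B ≤ (ρ*L)*B := mul_le_mul_of_nonneg_right h1.le hBpos.le
      _ = ρ*(L*B) := by ring
      _ < (min rF rG / (L*B+1))*(L*B) := mul_lt_mul_of_pos_right hρε (by positivity)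
      _ < min rF rG := by
          rw [div_mul_eq_mul_div, div_lt_iff₀ (by positivity)]
          exact mul_lt_mul_of_pos_left (lt_add_one (L*B)) (lt_min hrF hrG)
  have hδBF : δ * B < rF := lt_of_lt_of_le hδB (min_le_left _ _)
  have hδBG : δ * B < rG := lt_of_lt_of_le hδB (min_le_right _ _)
  -- coefficient comparisons
  have hcmp1 : A/(κ*L) ≤ A/(k₀*L) := by
    apply div_le_div_of_nonneg_left hApos.le (by positivity)
    exact mul_le_mul_of_nonneg_right hκk₀ hL.le
  have hcmp2 : 1/κ ≤ 1/k₀ := one_div_le_one_div_of_le hk₀pos hκk₀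
  have hcmp3 : 1/(κ^2*(L*M)) ≤ 1/(k₀^2*(L*M)) := by
    apply one_div_le_one_div_of_le (by positivity)
    exact mul_le_mul_of_nonneg_right hκsq (by positivity)
  have hcmp4 : 1/(κ^2*L) ≤ 1/(k₀^2*L) := by
    apply one_div_le_one_div_of_le (by positivity)
    exact mul_le_mul_of_nonneg_right hκsq hL.le
  have hc1 : A/(κ*L) ≤ B := by
    rw [hBdef]; linarith only [hcmp1, hApos, hB3, hB4, hB5]
  have hc2 : A + 1/κ ≤ B := by
    rw [hBdef]; linarith only [hcmp2, hB1, hB4, hB5]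
  have hc3 : A + 1/(κ^2*(L*M)) ≤ B := by
    rw [hBdef]; linarith only [hcmp3, hB1, hB3, hB5]
  have hc4 : A/(κ*L) + 1/(κ^2*L) ≤ B := by
    rw [hBdef]; linarith only [hcmp1, hcmp4, hApos, hB3, hB4]
  have hc5 : A ≤ B := by
    rw [hBdef]; linarith only [hB1, hB3, hB4, hB5]
  -- the invariant
  set Q : ℕ → X × Y × Y → Prop := fun n s =>
    s.2.1 ∈ F s.1 ∧ s.1 ∈ G s.2.2 ∧ ‖w' - (s.2.1 - s.2.2)‖ ≤ θ^n * δ ∧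
    ‖s.1 - x‖ ≤ δ/(κ*L) * (∑ i ∈ Finset.range n, θ^i) ∧
    ‖s.2.1 - y‖ ≤ δ * (∑ i ∈ Finset.range n, θ^i) ∧
    ‖s.2.2 - z‖ ≤ δ * (∑ i ∈ Finset.range n, θ^i) with hQdef
  have hQ0 : Q 0 (x, y, z) := by
    refine ⟨hy, hz, ?_, ?_, ?_, ?_⟩ <;> simp [hyz, hδdef]
  have hstep : ∀ n (s : X × Y × Y), Q n s → ∃ s', Q (n+1) s' ∧
      ‖s'.1 - s.1‖ ≤ θ^n*δ/(κ*L) ∧ ‖s'.2.1 - s.2.1‖ ≤ θ^n*δ ∧ ‖s'.2.2 - s.2.2‖ ≤ θ^n*δ := by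
    rintro n ⟨a, b, c⟩ ⟨hsF, hsG, hsδ, hsx, hsy, hsz⟩
    have hθn1 : θ^n ≤ 1 := pow_le_one₀ hθpos.le hθ1.le
    have hθnn : 0 ≤ θ^n := pow_nonneg hθpos.le n
    have hSn := hgeo n
    have hSn1 := hgeo (n+1)
    have hSsucc : (∑ i ∈ Finset.range (n+1), θ^i) = (∑ i ∈ Finset.range n, θ^i) + θ^n :=
      Finset.sum_range_succ _ _
    have hSnn : 0 ≤ (∑ i ∈ Finset.range n, θ^i) :=
      Finset.sum_nonneg fun i _ => pow_nonneg hθpos.le i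
    have hcb : (c + w') - b = w' - (b - c) := by abel
    have hcbn : ‖(c + w') - b‖ ≤ θ^n * δ := by rw [hcb]; exact hsδ
    have hbx1 : ‖a - x‖ + ‖(c + w') - b‖/(κ*L) < rF := by
      calc ‖a - x‖ + ‖(c + w') - b‖/(κ*L)
          ≤ δ/(κ*L) * (∑ i ∈ Finset.range n, θ^i) + (θ^n*δ)/(κ*L) := by
            gcongr
        _ = δ/(κ*L) * ((∑ i ∈ Finset.range n, θ^i) + θ^n) := by ring
        _ ≤ δ/(κ*L) * A := by
            rw [← hSsucc]
            exact mul_le_mul_of_nonneg_left hSn1 (by positivity)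
        _ = δ * (A/(κ*L)) := by ring
        _ ≤ δ * B := mul_le_mul_of_nonneg_left hc1 hδnn
        _ < rF := hδBF
    have hby1 : ‖b - y‖ + ‖(c + w') - b‖/κ < rF := by
      calc ‖b - y‖ + ‖(c + w') - b‖/κ
          ≤ δ * (∑ i ∈ Finset.range n, θ^i) + (θ^n*δ)/κ := by gcongr
        _ ≤ δ * A + δ * (1/κ) := by
            have h1 : (θ^n*δ)/κ ≤ δ * (1/κ) := by
              rw [div_eq_mul_one_div]
              apply mul_le_mul_of_nonneg_right _ (by positivity)
              calc θ^n*δ ≤ 1*δ := mul_le_mul_of_nonneg_right hθn1 hδnn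
                _ = δ := one_mul δ
            have h2 : δ * (∑ i ∈ Finset.range n, θ^i) ≤ δ * A :=
              mul_le_mul_of_nonneg_left hSn hδnn
            linarith
        _ = δ * (A + 1/κ) := by ring
        _ ≤ δ * B := mul_le_mul_of_nonneg_left hc2 hδnn
        _ < rF := hδBF
    obtain ⟨a', ha'F, ha'n⟩ :=
      lemA F L hL hF x y rF hSF κ hκ0 hκ1 a b (c + w') hsF hbx1 hby1
    have ha'n2 : ‖a' - a‖ ≤ (θ^n*δ)/(κ*L) := by
      apply le_trans ha'n
      gcongr
    have hbxG : ‖c - z‖ + ‖a' - a‖/(κ*M) < rG := by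
      calc ‖c - z‖ + ‖a' - a‖/(κ*M)
          ≤ δ * (∑ i ∈ Finset.range n, θ^i) + ((θ^n*δ)/(κ*L))/(κ*M) := by gcongr
        _ ≤ δ * A + δ * (1/(κ^2*(L*M))) := by
            have h1 : ((θ^n*δ)/(κ*L))/(κ*M) ≤ δ * (1/(κ^2*(L*M))) := by
              rw [div_div]
              rw [div_eq_mul_one_div]
              have : (κ*L)*(κ*M) = κ^2*(L*M) := by ring
              rw [this]
              apply mul_le_mul_of_nonneg_right _ (by positivity)
              calc θ^n*δ ≤ 1*δ := mul_le_mul_of_nonneg_right hθn1 hδnn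
                _ = δ := one_mul δ
            have h2 : δ * (∑ i ∈ Finset.range n, θ^i) ≤ δ * A :=
              mul_le_mul_of_nonneg_left hSn hδnn
            linarith
        _ = δ * (A + 1/(κ^2*(L*M))) := by ring
        _ ≤ δ * B := mul_le_mul_of_nonneg_left hc3 hδnn
        _ < rG := hδBG
    have hbyG : ‖a - x‖ + ‖a' - a‖/κ < rG := by
      calc ‖a - x‖ + ‖a' - a‖/κ
          ≤ δ/(κ*L) * (∑ i ∈ Finset.range n, θ^i) + ((θ^n*δ)/(κ*L))/κ := by gcongr
        _ ≤ δ * (A/(κ*L)) + δ * (1/(κ^2*L)) := by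
            have h1 : ((θ^n*δ)/(κ*L))/κ ≤ δ * (1/(κ^2*L)) := by
              rw [div_div, div_eq_mul_one_div]
              have : (κ*L)*κ = κ^2*L := by ring
              rw [this]
              apply mul_le_mul_of_nonneg_right _ (by positivity)
              calc θ^n*δ ≤ 1*δ := mul_le_mul_of_nonneg_right hθn1 hδnn
                _ = δ := one_mul δ
            have h2 : δ/(κ*L) * (∑ i ∈ Finset.range n, θ^i) ≤ δ * (A/(κ*L)) := by
              rw [show δ * (A/(κ*L)) = δ/(κ*L) * A by ring]
              exact mul_le_mul_of_nonneg_left hSn (by positivity)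
            linarith
        _ = δ * (A/(κ*L) + 1/(κ^2*L)) := by ring
        _ ≤ δ * B := mul_le_mul_of_nonneg_left hc4 hδnn
        _ < rG := hδBG
    obtain ⟨c', hc'G, hc'n⟩ :=
      lemA G M hM hG z x rG hSG κ hκ0 hκ1 c a a' hsG hbxG hbyG
    have hc'n2 : ‖c' - c‖ ≤ θ^(n+1) * δ := by
      apply le_trans hc'n
      calc ‖a' - a‖/(κ*M) ≤ ((θ^n*δ)/(κ*L))/(κ*M) := (div_le_div_iff_of_pos_right hκM).mpr ha'n2
        _ = θ^(n+1) * δ := by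
          rw [div_div, show (κ*L)*(κ*M) = κ^2*(L*M) by ring, div_eq_mul_one_div,
            ← hθdef, pow_succ]
          ring
    refine ⟨(a', c + w', c'), ⟨ha'F, hc'G, ?_, ?_, ?_, ?_⟩, ha'n2, ?_, ?_⟩
    · show ‖w' - ((c + w') - c')‖ ≤ θ^(n+1) * δ
      have : w' - ((c + w') - c') = c' - c := by abel
      rw [this]
      exact hc'n2
    · show ‖a' - x‖ ≤ δ/(κ*L) * (∑ i ∈ Finset.range (n+1), θ^i)
      rw [hSsucc]
      calc ‖a' - x‖ ≤ ‖a' - a‖ + ‖a - x‖ := norm_sub_le_norm_sub_add_norm_sub _ _ _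
        _ ≤ (θ^n*δ)/(κ*L) + δ/(κ*L) * (∑ i ∈ Finset.range n, θ^i) := by
            exact add_le_add ha'n2 hsx
        _ = δ/(κ*L) * ((∑ i ∈ Finset.range n, θ^i) + θ^n) := by ring
    · show ‖(c + w') - y‖ ≤ δ * (∑ i ∈ Finset.range (n+1), θ^i)
      rw [hSsucc]
      calc ‖(c + w') - y‖ ≤ ‖(c + w') - b‖ + ‖b - y‖ := norm_sub_le_norm_sub_add_norm_sub _ _ _
        _ ≤ θ^n*δ + δ * (∑ i ∈ Finset.range n, θ^i) := add_le_add hcbn hsy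
        _ = δ * ((∑ i ∈ Finset.range n, θ^i) + θ^n) := by ring
    · show ‖c' - z‖ ≤ δ * (∑ i ∈ Finset.range (n+1), θ^i)
      rw [hSsucc]
      calc ‖c' - z‖ ≤ ‖c' - c‖ + ‖c - z‖ := norm_sub_le_norm_sub_add_norm_sub _ _ _
        _ ≤ θ^(n+1)*δ + δ * (∑ i ∈ Finset.range n, θ^i) := add_le_add hc'n2 hsz
        _ ≤ δ * ((∑ i ∈ Finset.range n, θ^i) + θ^n) := by
            have hth : θ^(n+1) ≤ θ^n := by
              rw [pow_succ]
              calc θ^n*θ ≤ θ^n*1 := mul_le_mul_of_nonneg_left hθ1.le hθnn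
                _ = θ^n := mul_one _
            linarith only [mul_le_mul_of_nonneg_right hth hδnn]
    · show ‖(c + w') - b‖ ≤ θ^n*δ
      exact hcbn
    · show ‖c' - c‖ ≤ θ^n*δ
      apply hc'n2.trans
      rw [pow_succ]
      have h := mul_le_mul_of_nonneg_right (mul_le_mul_of_nonneg_left hθ1.le hθnn) hδnn
      linarith only [h]
  choose! f hf1 hf2 hf3 hf4 using hstep
  let u : ℕ → X × Y × Y := fun n => Nat.rec (x, y, z) (fun k p => f k p) n
  have husucc : ∀ n, u (n+1) = f n (u n) := fun _ => rfl
  have hQn : ∀ n, Q n (u n) := by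
    intro n
    induction n with
    | zero => exact hQ0
    | succ k ih => rw [husucc k]; exact hf1 k (u k) ih
  have hdx : ∀ n, dist ((u n).1) ((u (n+1)).1) ≤ (δ/(κ*L)) * θ^n := by
    intro n
    rw [dist_eq_norm, norm_sub_rev]
    have := husucc n ▸ hf2 n (u n) (hQn n)
    calc ‖(u (n+1)).1 - (u n).1‖ ≤ θ^n*δ/(κ*L) := this
      _ = (δ/(κ*L)) * θ^n := by ring
  have hdy : ∀ n, dist ((u n).2.1) ((u (n+1)).2.1) ≤ δ * θ^n := by
    intro n
    rw [dist_eq_norm, norm_sub_rev]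
    have := husucc n ▸ hf3 n (u n) (hQn n)
    calc ‖(u (n+1)).2.1 - (u n).2.1‖ ≤ θ^n*δ := this
      _ = δ * θ^n := by ring
  have hdz : ∀ n, dist ((u n).2.2) ((u (n+1)).2.2) ≤ δ * θ^n := by
    intro n
    rw [dist_eq_norm, norm_sub_rev]
    have := husucc n ▸ hf4 n (u n) (hQn n)
    calc ‖(u (n+1)).2.2 - (u n).2.2‖ ≤ θ^n*δ := this
      _ = δ * θ^n := by ring
  obtain ⟨x', hx'⟩ := cauchySeq_tendsto_of_complete (cauchySeq_of_le_geometric θ _ hθ1 hdx)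
  obtain ⟨y', hy'⟩ := cauchySeq_tendsto_of_complete (cauchySeq_of_le_geometric θ _ hθ1 hdy)
  obtain ⟨z', hz'⟩ := cauchySeq_tendsto_of_complete (cauchySeq_of_le_geometric θ _ hθ1 hdz)
  -- graph limits
  have hxball : ∀ n, ‖(u n).1 - x‖ ≤ δ * B := by
    intro n
    obtain ⟨-, -, -, h4, -, -⟩ := hQn n
    calc ‖(u n).1 - x‖ ≤ δ/(κ*L) * (∑ i ∈ Finset.range n, θ^i) := h4
      _ ≤ δ/(κ*L) * A := mul_le_mul_of_nonneg_left (hgeo n) (by positivity)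
      _ = δ * (A/(κ*L)) := by ring
      _ ≤ δ * B := mul_le_mul_of_nonneg_left hc1 hδnn
  have hyball : ∀ n, ‖(u n).2.1 - y‖ ≤ δ * B := by
    intro n
    obtain ⟨-, -, -, -, h5, -⟩ := hQn n
    calc ‖(u n).2.1 - y‖ ≤ δ * (∑ i ∈ Finset.range n, θ^i) := h5
      _ ≤ δ * A := mul_le_mul_of_nonneg_left (hgeo n) hδnn
      _ ≤ δ * B := mul_le_mul_of_nonneg_left hc5 hδnn
  have hzball : ∀ n, ‖(u n).2.2 - z‖ ≤ δ * B := by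
    intro n
    obtain ⟨-, -, -, -, -, h6⟩ := hQn n
    calc ‖(u n).2.2 - z‖ ≤ δ * (∑ i ∈ Finset.range n, θ^i) := h6
      _ ≤ δ * A := mul_le_mul_of_nonneg_left (hgeo n) hδnn
      _ ≤ δ * B := mul_le_mul_of_nonneg_left hc5 hδnn
  have hy'F : y' ∈ F x' := by
    have hmem : ∀ n, ((u n).1, (u n).2.1) ∈
        ({q : X × Y | q.2 ∈ F q.1} ∩ Metric.closedBall (x, y) rF) := by
      intro n
      refine ⟨(hQn n).1, ?_⟩
      rw [mem_closedBall, Prod.dist_eq]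
      apply max_le
      · rw [dist_eq_norm]; linarith [hxball n]
      · rw [dist_eq_norm]; linarith [hyball n]
    have hlim : Tendsto (fun n => ((u n).1, (u n).2.1)) atTop (nhds (x', y')) :=
      hx'.prodMk_nhds hy'
    exact (hSF.mem_of_tendsto hlim (Eventually.of_forall hmem)).1
  have hx'G : x' ∈ G z' := by
    have hmem : ∀ n, ((u n).2.2, (u n).1) ∈
        ({q : Y × X | q.2 ∈ G q.1} ∩ Metric.closedBall (z, x) rG) := by
      intro n
      refine ⟨(hQn n).2.1, ?_⟩
      rw [mem_closedBall, Prod.dist_eq]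
      apply max_le
      · rw [dist_eq_norm]; linarith [hzball n]
      · rw [dist_eq_norm]; linarith [hxball n]
    have hlim : Tendsto (fun n => ((u n).2.2, (u n).1)) atTop (nhds (z', x')) :=
      hz'.prodMk_nhds hx'
    exact (hSG.mem_of_tendsto hlim (Eventually.of_forall hmem)).1
  -- limit identity
  have hw'eq : y' - z' = w' := by
    have h1 : Tendsto (fun n => (u n).2.1 - (u n).2.2) atTop (nhds (y' - z')) := hy'.sub hz'
    have h2 : Tendsto (fun n => (u n).2.1 - (u n).2.2) atTop (nhds w') := by
      rw [tendsto_iff_dist_tendsto_zero]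
      apply squeeze_zero (fun n => dist_nonneg) (g := fun n => θ^n * δ)
      · intro n
        rw [dist_eq_norm, norm_sub_rev]
        exact (hQn n).2.2.1
      · rw [show (0:ℝ) = 0 * δ by simp]
        exact (tendsto_pow_atTop_nhds_zero_of_lt_one hθpos.le hθ1).mul_const δ
    exact tendsto_nhds_unique h1 h2
  -- x' in the ball
  have hx'ball : x' ∈ ball x ρ := by
    rw [mem_ball, dist_eq_norm]
    have hD : δ/(κ*L) * (1/(1-θ)) < ρ := by
      have hkLθ : κ*L*(1-θ) = κ*L - 1/(κ*M) := by
        rw [hθdef]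
        field_simp [hκ0.ne', hL.ne', hM.ne']
      have h1θ : (0:ℝ) < 1-θ := by linarith only [hθ1]
      have hrw : δ/(κ*L) * (1/(1-θ)) = δ/(κ*L*(1-θ)) := by
        rw [div_mul_div_comm, mul_one]
      rw [hrw, div_lt_iff₀ (mul_pos hκL h1θ)]
      calc δ < ρ * (κ*L - 1/(κ*M)) := hδκ
        _ = ρ * (κ*L*(1-θ)) := by rw [hkLθ]
    have hlim : ‖x' - x‖ ≤ δ/(κ*L) * (1/(1-θ)) := by
      apply le_of_tendsto ((hx'.sub tendsto_const_nhds).norm)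
      apply Eventually.of_forall
      intro n
      obtain ⟨-, -, -, h4, -, -⟩ := hQn n
      calc ‖(u n).1 - x‖ ≤ δ/(κ*L) * (∑ i ∈ Finset.range n, θ^i) := h4
        _ ≤ δ/(κ*L) * (1/(1-θ)) := mul_le_mul_of_nonneg_left (hgeo' n) (by positivity)
    linarith only [hD, hlim]
  exact mem_iUnion₂.mpr ⟨x', hx'ball, hw'eq ▸ Set.sub_mem_sub hy'F hx'G⟩
end
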